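/- Let m ≥ 2, let 𝒞 be a concept class over {0,1}^m, and let 𝒞' ⊆ 𝒞. Fix y_{m−1}, y_m ∈ {0,1} and set y'_{m−1} = 1 − y_{m−1}, y'_m = 1 − y_m. Assume: (P1) for every a ∈ {0,1}^m with a_m = y_m and every C ∈ 𝒞', C(a) = 1; and (P2) for every a ∈ {0,1}^m with a_m = y'_m and a_{m−1} = y_{m−1} and every C ∈ 𝒞', C(a) = 0. Let 𝒞'' be the concept class over {0,1}^{m−2} consisting of all functions (a_1,…,a_{m−2}) ↦ C(a_1,…,a_{m−2}, y'_{m−1}, y'_m) for C ∈ 𝒞'. Then S^d_min(𝒞) ≥ S^d_min(𝒞') ≥ S[MQ](𝒞''), where d is the Hamming distance on {0,1}^m. -/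

import Mathlib

open scoped NNReal

/-- The interaction game for learning from a contrast oracle:
`Identifiable pt CS n V` holds iff the learner can guarantee, within at most `n` rounds,
that the version space (starting from `V`) becomes a singleton `{C*}` (i.e. a subsingleton,
since the target always stays in the version space), against every target `C* ∈ V` and
every adversarial choice of contrastive examples from the contrast set `CS`.
A query has type `Q`; `pt q` is the instance whose label is returned; `CS q C V` is the
contrast set of the query `q` w.r.t. concept `C` and current version space `V`. -/
def Identifiable {X Q : Type*} (pt : Q → X)
    (CS : Q → (X → Bool) → Set (X → Bool) → Set X) :
    ℕ → Set (X → Bool) → Prop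
  | 0, V => V.Subsingleton
  | n + 1, V =>
      V.Subsingleton ∨
        ∃ q : Q, ∀ Cstar ∈ V,
          ((CS q Cstar V = ∅ →
            Identifiable pt CS n
              {C ∈ V | C (pt q) = Cstar (pt q) ∧ CS q C V = ∅}) ∧
          (∀ x' ∈ CS q Cstar V,
            Identifiable pt CS n
              {C ∈ V | C (pt q) = Cstar (pt q) ∧ x' ∈ CS q C V ∧ C x' = Cstar x'}))

/-- The contrast sample complexity of class `𝓒` (as an extended natural number):
the least `n` such that some learner identifies every target within `n` rounds. -/
noncomputable def sampleComplexity {X Q : Type*} (pt : Q → X)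
    (CS : Q → (X → Bool) → Set (X → Bool) → Set X) (𝓒 : Set (X → Bool)) : ℕ∞ :=
  sInf {n : ℕ∞ | ∃ k : ℕ, n = (k : ℕ∞) ∧ Identifiable pt CS k 𝓒}

/-- Minimum-distance contrast set: points of opposite label at minimal `d`-distance. -/
def CSmin {X : Type*} (d : X → X → ℝ≥0) (x : X) (C : X → Bool) : Set X :=
  {x' | C x' ≠ C x ∧ ∀ x'' : X, C x'' ≠ C x → d x x' ≤ d x x''}

/-- Sample complexity in the minimum-distance model. -/
noncomputable def Smin {X : Type*} (d : X → X → ℝ≥0) (𝓒 : Set (X → Bool)) : ℕ∞ :=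
  sampleComplexity (id : X → X) (fun x C _ => CSmin d x C) 𝓒

/-- Proximity contrast set: points of opposite label within distance `r` of `x`. -/
def CSprox {X : Type*} (d : X → X → ℝ≥0) (x : X) (r : ℝ≥0) (C : X → Bool) : Set X :=
  {x' | C x' ≠ C x ∧ d x x' ≤ r}

/-- Sample complexity in the proximity model (queries are pairs `(x, r)`). -/
noncomputable def Sprox {X : Type*} (d : X → X → ℝ≥0) (𝓒 : Set (X → Bool)) : ℕ∞ :=
  sampleComplexity (Prod.fst : X × ℝ≥0 → X) (fun q C _ => CSprox d q.1 q.2 C) 𝓒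

/-- Membership-query complexity: the contrast sets are always empty,
so the oracle only ever returns the label of the queried point. -/
noncomputable def SMQ {X : Type*} (𝓒 : Set (X → Bool)) : ℕ∞ :=
  sampleComplexity (id : X → X) (fun _ _ _ => (∅ : Set X)) 𝓒

/-! ### Auxiliary lemmas -/

lemma hd_card {ι : Type*} [Fintype ι] [DecidableEq ι] (x y : ι → Bool) (s : Finset ι)
    (h : ∀ i, x i ≠ y i ↔ i ∈ s) : hammingDist x y = s.card := by
  unfold hammingDist
  congr 1
  ext i
  simp [h]

lemma hd_flip1 {ι : Type*} [Fintype ι] [DecidableEq ι] (x : ι → Bool) (i : ι) :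
    hammingDist x (Function.update x i (!x i)) = 1 := by
  rw [hd_card x _ {i}]
  · simp
  · intro j
    by_cases hj : j = i
    · subst hj; simp [Function.update_self]
    · simp [Function.update_of_ne hj, hj]

lemma hd_flip2 {ι : Type*} [Fintype ι] [DecidableEq ι] (x : ι → Bool) (i j : ι) (hij : i ≠ j) :
    hammingDist x (Function.update (Function.update x i (!x i)) j (!x j)) = 2 := by
  rw [hd_card x _ {i, j}]
  · rw [Finset.card_insert_of_notMem (by simp [hij]), Finset.card_singleton]
  · intro k
    by_cases hk : k = j
    · subst hk; simp [Function.update_self, hij]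
    · by_cases hk' : k = i
      · subst hk'; simp [Function.update_of_ne hk, Function.update_self, hk]
      · simp [Function.update_of_ne hk, Function.update_of_ne hk', hk, hk']

lemma eq_flip_of_hd_le_one {ι : Type*} [Fintype ι] [DecidableEq ι] (x y : ι → Bool)
    (h : hammingDist x y ≤ 1) (i : ι) (hi : y i ≠ x i) : y = Function.update x i (!x i) := by
  funext j
  by_cases hj : j = i
  · subst hj
    rw [Function.update_self]
    revert hi; cases x j <;> cases y j <;> simp
  · rw [Function.update_of_ne hj]
    by_contra hyj
    unfold hammingDist at h
    have h1 : i ∈ ({k | x k ≠ y k} : Finset ι) := by simp [Ne.symm hi]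
    have h2 : j ∈ ({k | x k ≠ y k} : Finset ι) := by simp [Ne.symm hyj]
    exact hj (Finset.card_le_one.mp h j h2 i h1)

lemma identifiable_mono {X Q : Type*} (pt : Q → X) (f : Q → (X → Bool) → Set X) :
    ∀ (n : ℕ) (V V' : Set (X → Bool)), V' ⊆ V →
      Identifiable pt (fun q C _ => f q C) n V → Identifiable pt (fun q C _ => f q C) n V' := by
  intro n
  induction n with
  | zero => exact fun V V' hVV h => h.anti hVV
  | succ n ih =>
    intro V V' hVV h
    rcases h with h | ⟨q, hq⟩
    · exact Or.inl (h.anti hVV)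
    · refine Or.inr ⟨q, fun Cstar hC => ?_⟩
      obtain ⟨h1, h2⟩ := hq Cstar (hVV hC)
      constructor
      · intro he
        refine ih _ _ ?_ (h1 he)
        intro C hC'
        exact ⟨hVV hC'.1, hC'.2⟩
      · intro x' hx'
        refine ih _ _ ?_ (h2 x' hx')
        intro C hC'
        exact ⟨hVV hC'.1, hC'.2⟩

lemma ident_congr {X Q : Type*} (pt : Q → X) (CS : Q → (X → Bool) → Set (X → Bool) → Set X)
    (n : ℕ) {A B : Set (X → Bool)} (h : A = B)
    (hA : Identifiable pt CS n A) : Identifiable pt CS n B := h ▸ hA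

lemma mq_succ {X : Type*} (n : ℕ) (W : Set (X → Bool)) (q : X)
    (h : ∀ D ∈ W, Identifiable (id : X → X) (fun _ _ _ => (∅ : Set X)) n {C ∈ W | C q = D q}) :
    Identifiable (id : X → X) (fun _ _ _ => (∅ : Set X)) (n + 1) W := by
  refine Or.inr ⟨q, fun D hD => ⟨fun _ => ?_, fun x' hx' => absurd hx' (Set.notMem_empty x')⟩⟩
  refine ident_congr _ _ n (A := {C ∈ W | C q = D q}) ?_ (h D hD)
  ext C
  simp

lemma min1 {m : ℕ} (x x' : Fin m → Bool) (C : (Fin m → Bool) → Bool)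
    (hne : C x' ≠ C x) (hd : hammingDist x x' = 1) :
    x' ∈ CSmin (fun a b => ((hammingDist a b : ℕ) : ℝ≥0)) x C := by
  refine ⟨hne, fun x'' h'' => ?_⟩
  have hxx : x ≠ x'' := fun e => h'' (by rw [← e])
  have h1 : 1 ≤ hammingDist x x'' := hammingDist_pos.mpr hxx
  exact (Nat.cast_le (α := ℝ≥0)).mpr (by omega)

def embQ (m : ℕ) (ym1 ym : Bool) (a : Fin (m - 2) → Bool) : Fin m → Bool :=
  fun i => if h : (i : ℕ) < m - 2 then a ⟨(i : ℕ), h⟩ else if (i : ℕ) = m - 2 then !ym1 else !ym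

def restr (m : ℕ) (hm : 2 ≤ m) (x : Fin m → Bool) : Fin (m - 2) → Bool :=
  fun i => x ⟨(i : ℕ), by have := i.2; omega⟩

def idx1 (m : ℕ) (hm : 2 ≤ m) : Fin m := ⟨m - 1, Nat.sub_lt (by omega) Nat.one_pos⟩
def idx2 (m : ℕ) (hm : 2 ≤ m) : Fin m := ⟨m - 2, Nat.sub_lt (by omega) Nat.two_pos⟩

lemma idx1_ne_idx2 (m : ℕ) (hm : 2 ≤ m) : idx1 m hm ≠ idx2 m hm :=
  Fin.ne_of_val_ne (by simp only [idx1, idx2]; omega)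

lemma idx2_ne_idx1 (m : ℕ) (hm : 2 ≤ m) : idx2 m hm ≠ idx1 m hm :=
  (idx1_ne_idx2 m hm).symm

lemma embQ_restr (m : ℕ) (hm : 2 ≤ m) (ym1 ym : Bool) (x : Fin m → Bool)
    (h1 : x (idx1 m hm) = !ym) (h2 : x (idx2 m hm) = !ym1) :
    embQ m ym1 ym (restr m hm x) = x := by
  funext i
  unfold embQ restr
  by_cases h : (i : ℕ) < m - 2
  · rw [dif_pos h]
  · rw [dif_neg h]
    by_cases h' : (i : ℕ) = m - 2
    · rw [if_pos h', ← h2]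
      exact congrArg x (Fin.ext h'.symm)
    · rw [if_neg h', ← h1]
      have hv : (i : ℕ) = m - 1 := by have := i.2; omega
      exact congrArg x (Fin.ext hv.symm)

lemma embQ_restr_flip (m : ℕ) (hm : 2 ≤ m) (ym1 ym : Bool) (x : Fin m → Bool)
    (h1 : x (idx1 m hm) = ym) (h2 : x (idx2 m hm) = !ym1) :
    embQ m ym1 ym (restr m hm x) = Function.update x (idx1 m hm) (!x (idx1 m hm)) := by
  funext i
  by_cases hi1 : i = idx1 m hm
  · subst hi1
    rw [Function.update_self]
    unfold embQ restr
    have hv : (idx1 m hm : ℕ) = m - 1 := rfl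
    rw [dif_neg (by omega : ¬ ((idx1 m hm : ℕ) < m - 2)),
      if_neg (by omega : ¬ ((idx1 m hm : ℕ) = m - 2)), h1]
  · rw [Function.update_of_ne hi1]
    unfold embQ restr
    by_cases h : (i : ℕ) < m - 2
    · rw [dif_pos h]
    · have hne : (i : ℕ) ≠ m - 1 := fun e => hi1 (Fin.ext e)
      have h' : (i : ℕ) = m - 2 := by have := i.2; omega
      rw [dif_neg h, if_pos h', ← h2]
      exact congrArg x (Fin.ext h'.symm)

/-- Key reduction: a min-distance learner for `𝓒'` yields a membership-query learner
for the restricted class. -/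
lemma keyred (m : ℕ) (hm : 2 ≤ m) (𝓒' : Set ((Fin m → Bool) → Bool)) (ym1 ym : Bool)
    (hP1 : ∀ a : Fin m → Bool, a (idx1 m hm) = ym → ∀ C ∈ 𝓒', C a = true)
    (hP2 : ∀ a : Fin m → Bool, a (idx1 m hm) = !ym → a (idx2 m hm) = ym1 →
      ∀ C ∈ 𝓒', C a = false) :
    ∀ (n : ℕ) (V : Set ((Fin m → Bool) → Bool)), V ⊆ 𝓒' →
      Identifiable id (fun x C _ => CSmin (fun a b => ((hammingDist a b : ℕ) : ℝ≥0)) x C) n V →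
      Identifiable (id : (Fin (m - 2) → Bool) → (Fin (m - 2) → Bool))
        (fun _ _ _ => (∅ : Set (Fin (m - 2) → Bool))) n
        ((fun C a => C (embQ m ym1 ym a)) '' V) := by
  have hP1' : ∀ a : Fin m → Bool, a (idx1 m hm) = ym → ∀ C ∈ 𝓒', C a = true := hP1
  have hP2' : ∀ a : Fin m → Bool, a (idx1 m hm) = !ym → a (idx2 m hm) = ym1 →
      ∀ C ∈ 𝓒', C a = false := hP2
  intro n
  induction n with
  | zero =>
    intro V _ h
    exact Set.Subsingleton.image h _
  | succ n ih =>
    intro V hV h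
    rcases h with h | ⟨x, hx⟩
    · exact Or.inl (Set.Subsingleton.image h _)
    -- the common finishing move for the informative cases
    have final : ∀ Cstar ∈ V,
        Identifiable id (fun x C _ => CSmin (fun a b => ((hammingDist a b : ℕ) : ℝ≥0)) x C) n
          {C ∈ V | C (embQ m ym1 ym (restr m hm x)) = Cstar (embQ m ym1 ym (restr m hm x))} →
        Identifiable (id : (Fin (m - 2) → Bool) → (Fin (m - 2) → Bool))
          (fun _ _ _ => (∅ : Set (Fin (m - 2) → Bool))) n
          {C ∈ (fun C a => C (embQ m ym1 ym a)) '' V |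
            C (restr m hm x) = (fun C a => C (embQ m ym1 ym a)) Cstar (restr m hm x)} := by
      intro Cstar _ hid
      refine ident_congr _ _ n ?_ (ih _ (fun C hC => hV hC.1) hid)
      ext D'
      constructor
      · rintro ⟨C, ⟨hCV, hval⟩, rfl⟩
        exact ⟨⟨C, hCV, rfl⟩, hval⟩
      · rintro ⟨⟨C, hCV, rfl⟩, hval⟩
        exact ⟨C, ⟨hCV, hval⟩, rfl⟩
    by_cases h2 : x (idx2 m hm) = ym1
    · -- forced case: the oracle's answer gives no information; successor space is V itself
      have key0 : Identifiable (id : (Fin (m - 2) → Bool) → (Fin (m - 2) → Bool))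
          (fun _ _ _ => (∅ : Set (Fin (m - 2) → Bool))) n
          ((fun C a => C (embQ m ym1 ym a)) '' V) := by
        rcases Set.eq_empty_or_nonempty V with hVe | ⟨C0, hC0⟩
        · subst hVe
          apply ih ∅ (by simp)
          cases n with
          | zero => exact Set.subsingleton_empty
          | succ k => exact Or.inl Set.subsingleton_empty
        have hbase : ∀ lx : Bool, (∀ C ∈ 𝓒', C x = lx) →
            (∀ C ∈ 𝓒', C (Function.update x (idx1 m hm) (!x (idx1 m hm))) = !lx) →
            Identifiable (id : (Fin (m - 2) → Bool) → (Fin (m - 2) → Bool))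
              (fun _ _ _ => (∅ : Set (Fin (m - 2) → Bool))) n
              ((fun C a => C (embQ m ym1 ym a)) '' V) := by
          intro lx hCx hCz
          set z : Fin m → Bool := Function.update x (idx1 m hm) (!x (idx1 m hm)) with hzdef
          have hzmem : ∀ C ∈ V, z ∈ CSmin (fun a b => ((hammingDist a b : ℕ) : ℝ≥0)) x C :=
            fun C hC => min1 x z C
              (by rw [hCz C (hV hC), hCx C (hV hC)]; cases lx <;> simp) (hd_flip1 x _)
          have hid := (hx C0 hC0).2 z (hzmem C0 hC0)
          have hSeq : {C ∈ V | C (id x) = C0 (id x) ∧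
              z ∈ (fun x C (_ : Set ((Fin m → Bool) → Bool)) =>
                CSmin (fun a b => ((hammingDist a b : ℕ) : ℝ≥0)) x C) x C V ∧ C z = C0 z} = V := by
            ext C
            simp only [Set.mem_setOf_eq, id_eq]
            refine ⟨fun h => h.1, fun hC => ⟨hC, ?_, hzmem C hC, ?_⟩⟩
            · rw [hCx C (hV hC), hCx C0 (hV hC0)]
            · rw [hCz C (hV hC), hCz C0 (hV hC0)]
          exact ih V hV (ident_congr _ _ n hSeq hid)
        by_cases h1 : x (idx1 m hm) = ym
        · refine hbase true (fun C hC => hP1' x h1 C hC) (fun C hC => hP2' _ ?_ ?_ C hC)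
          · rw [Function.update_self, h1]
          · rw [Function.update_of_ne (idx2_ne_idx1 m hm)]; exact h2
        · have hx1 : x (idx1 m hm) = !ym := by revert h1; cases x (idx1 m hm) <;> cases ym <;> simp
          refine hbase false (fun C hC => hP2' x hx1 h2 C hC) (fun C hC => hP1' _ ?_ C hC)
          rw [Function.update_self, hx1, Bool.not_not]
      refine mq_succ n _ (restr m hm x) (fun D hD => ?_)
      exact identifiable_mono id (fun _ _ => (∅ : Set (Fin (m - 2) → Bool))) n _ _
        (fun C hC => hC.1) key0
    · -- informative case
      have hx2 : x (idx2 m hm) = !ym1 := by revert h2; cases x (idx2 m hm) <;> cases ym1 <;> simp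
      refine mq_succ n _ (restr m hm x) (fun D hD => ?_)
      obtain ⟨Cstar, hCs, rfl⟩ := hD
      set z : Fin m → Bool := embQ m ym1 ym (restr m hm x) with hzdef
      by_cases h1 : x (idx1 m hm) = ym
      · -- case B1: x is in the all-ones region, the restriction point is z (a flip of x)
        have hzx : z = Function.update x (idx1 m hm) (!x (idx1 m hm)) :=
          embQ_restr_flip m hm ym1 ym x h1 hx2
        have hz1 : z (idx1 m hm) = !x (idx1 m hm) := by rw [hzx]; exact Function.update_self _ _ _
        have hz2 : z (idx2 m hm) = x (idx2 m hm) := by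
          rw [hzx]; exact Function.update_of_ne (idx2_ne_idx1 m hm) _ _
        have hdxz : hammingDist x z = 1 := by rw [hzx]; exact hd_flip1 _ _
        have hCx : ∀ C ∈ 𝓒', C x = true := fun C hC => hP1' x h1 C hC
        by_cases hb : Cstar z = true
        · -- the minimum-distance contrast point is at distance 2
          set w : Fin m → Bool := Function.update (Function.update x (idx1 m hm)
            (!x (idx1 m hm))) (idx2 m hm) (!x (idx2 m hm)) with hwdef
          have hw1 : w (idx1 m hm) = !x (idx1 m hm) := by
            rw [hwdef, Function.update_of_ne (idx1_ne_idx2 m hm)]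
            exact Function.update_self _ _ _
          have hw2 : w (idx2 m hm) = !x (idx2 m hm) := Function.update_self _ _ _
          have hCw : ∀ C ∈ 𝓒', C w = false := fun C hC =>
            hP2' w (by rw [hw1, h1]) (by rw [hw2, hx2, Bool.not_not]) C hC
          have hdxw : hammingDist x w = 2 := hd_flip2 x _ _ (idx1_ne_idx2 m hm)
          have hfar : ∀ C ∈ 𝓒', C z = true → ∀ x'', C x'' ≠ C x → 2 ≤ hammingDist x x'' := by
            intro C hC hCz x'' hne'
            have hCxt : C x = true := hCx C hC
            have hCx'' : C x'' = false := by
              rw [hCxt] at hne'; revert hne'; cases C x'' <;> simp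
            by_contra hlt
            push_neg at hlt
            have hle : hammingDist x x'' ≤ 1 := by omega
            have hxne : x'' ≠ x := by
              intro e; rw [e, hCxt] at hCx''; exact Bool.noConfusion hCx''
            obtain ⟨i, hi⟩ : ∃ i, x'' i ≠ x i := by
              by_contra hall; push_neg at hall; exact hxne (funext hall)
            have hx''eq : x'' = Function.update x i (!x i) := eq_flip_of_hd_le_one x x'' hle i hi
            by_cases hii : i = idx1 m hm
            · subst hii
              have ht : C x'' = true := by rw [hx''eq, ← hzx]; exact hCz
              rw [hCx''] at ht; exact Bool.noConfusion ht
            · have hcoord : x'' (idx1 m hm) = ym := by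
                rw [hx''eq, Function.update_of_ne (fun e => hii e.symm)]; exact h1
              have ht := hP1' x'' hcoord C hC
              rw [hCx''] at ht; exact Bool.noConfusion ht
          have hwmem : w ∈ CSmin (fun a b => ((hammingDist a b : ℕ) : ℝ≥0)) x Cstar := by
            refine ⟨?_, fun x'' h'' => ?_⟩
            · rw [hCw Cstar (hV hCs), hCx Cstar (hV hCs)]; simp
            · have := hfar Cstar (hV hCs) hb x'' h''
              exact (Nat.cast_le (α := ℝ≥0)).mpr (by omega)
          have hid := (hx Cstar hCs).2 w hwmem
          refine final Cstar hCs (ident_congr _ _ n ?_ hid)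
          ext C
          simp only [Set.mem_setOf_eq, id_eq]
          constructor
          · rintro ⟨hCV, -, hwC, -⟩
            refine ⟨hCV, ?_⟩
            rw [hb]
            by_contra hCzn
            have hCzf : C z = false := by revert hCzn; cases C z <;> simp
            have hnez : C z ≠ C x := by rw [hCzf, hCx C (hV hCV)]; simp
            have hle := hwC.2 z hnez
            have hle' : hammingDist x w ≤ hammingDist x z := (Nat.cast_le (α := ℝ≥0)).mp hle
            omega
          · rintro ⟨hCV, hCzeq⟩
            have hCzt : C z = true := by rw [hCzeq, hb]
            refine ⟨hCV, by rw [hCx C (hV hCV), hCx Cstar (hV hCs)], ⟨?_, fun x'' h'' => ?_⟩,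
              by rw [hCw C (hV hCV), hCw Cstar (hV hCs)]⟩
            · rw [hCw C (hV hCV), hCx C (hV hCV)]; simp
            · have := hfar C (hV hCV) hCzt x'' h''
              exact (Nat.cast_le (α := ℝ≥0)).mpr (by omega)
        · -- the restriction point z itself is the contrast point
          have hbz : Cstar z = false := by revert hb; cases Cstar z <;> simp
          have hzmem : z ∈ CSmin (fun a b => ((hammingDist a b : ℕ) : ℝ≥0)) x Cstar :=
            min1 x z Cstar (by rw [hbz, hCx Cstar (hV hCs)]; simp) hdxz
          have hid := (hx Cstar hCs).2 z hzmem
          refine final Cstar hCs (ident_congr _ _ n ?_ hid)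
          ext C
          simp only [Set.mem_setOf_eq, id_eq]
          constructor
          · rintro ⟨hCV, -, -, hval⟩
            exact ⟨hCV, hval⟩
          · rintro ⟨hCV, hval⟩
            have hCzf : C z = false := by rw [hval, hbz]
            exact ⟨hCV, by rw [hCx C (hV hCV), hCx Cstar (hV hCs)],
              min1 x z C (by rw [hCzf, hCx C (hV hCV)]; simp) hdxz, hval⟩
      · -- case A: x is a free point, so z = x
        have hx1 : x (idx1 m hm) = !ym := by revert h1; cases x (idx1 m hm) <;> cases ym <;> simp
        have hzx : z = x := embQ_restr m hm ym1 ym x hx1 hx2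
        by_cases hb : Cstar x = true
        · -- contrast point: flip the (m-1)-st coordinate, landing in the all-zeros region
          set w : Fin m → Bool := Function.update x (idx2 m hm) (!x (idx2 m hm)) with hwdef
          have hw1 : w (idx1 m hm) = x (idx1 m hm) :=
            Function.update_of_ne (idx1_ne_idx2 m hm) _ _
          have hw2 : w (idx2 m hm) = !x (idx2 m hm) := Function.update_self _ _ _
          have hCw : ∀ C ∈ 𝓒', C w = false := fun C hC =>
            hP2' w (by rw [hw1, hx1]) (by rw [hw2, hx2, Bool.not_not]) C hC
          have hid := (hx Cstar hCs).2 w (min1 x w Cstar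
            (by rw [hCw Cstar (hV hCs), hb]; simp) (hd_flip1 x _))
          refine final Cstar hCs (ident_congr _ _ n ?_ hid)
          ext C
          simp only [Set.mem_setOf_eq, id_eq]
          constructor
          · rintro ⟨hCV, hval, -, -⟩
            exact ⟨hCV, by rw [hzx]; exact hval⟩
          · rintro ⟨hCV, hval⟩
            have hval' : C x = Cstar x := by rw [← hzx]; exact hval
            have hCxt : C x = true := by rw [hval', hb]
            exact ⟨hCV, hval', min1 x w C (by rw [hCw C (hV hCV), hCxt]; simp) (hd_flip1 x _),
              by rw [hCw C (hV hCV), hCw Cstar (hV hCs)]⟩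
        · -- contrast point: flip the m-th coordinate, landing in the all-ones region
          have hbx : Cstar x = false := by revert hb; cases Cstar x <;> simp
          set w : Fin m → Bool := Function.update x (idx1 m hm) (!x (idx1 m hm)) with hwdef
          have hw1 : w (idx1 m hm) = !x (idx1 m hm) := Function.update_self _ _ _
          have hCw : ∀ C ∈ 𝓒', C w = true := fun C hC =>
            hP1' w (by rw [hw1, hx1, Bool.not_not]) C hC
          have hid := (hx Cstar hCs).2 w (min1 x w Cstar
            (by rw [hCw Cstar (hV hCs), hbx]; simp) (hd_flip1 x _))
          refine final Cstar hCs (ident_congr _ _ n ?_ hid)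
          ext C
          simp only [Set.mem_setOf_eq, id_eq]
          constructor
          · rintro ⟨hCV, hval, -, -⟩
            exact ⟨hCV, by rw [hzx]; exact hval⟩
          · rintro ⟨hCV, hval⟩
            have hval' : C x = Cstar x := by rw [← hzx]; exact hval
            have hCxf : C x = false := by rw [hval', hbx]
            exact ⟨hCV, hval', min1 x w C (by rw [hCw C (hV hCV), hCxf]; simp) (hd_flip1 x _),
              by rw [hCw C (hV hCV), hCw Cstar (hV hCs)]⟩

theorem statement14 (m : ℕ) (hm : 2 ≤ m)
    (𝓒 𝓒' : Set ((Fin m → Bool) → Bool)) (hsub : 𝓒' ⊆ 𝓒)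
    (ym1 ym : Bool)
    (hP1 : ∀ a : Fin m → Bool, a ⟨m - 1, by omega⟩ = ym → ∀ C ∈ 𝓒', C a = true)
    (hP2 : ∀ a : Fin m → Bool,
      a ⟨m - 1, by omega⟩ = !ym → a ⟨m - 2, by omega⟩ = ym1 → ∀ C ∈ 𝓒', C a = false) :
    SMQ {C'' : (Fin (m - 2) → Bool) → Bool | ∃ C ∈ 𝓒',
        C'' = fun a => C (fun i => if h : (i : ℕ) < m - 2 then a ⟨(i : ℕ), h⟩
          else if (i : ℕ) = m - 2 then !ym1 else !ym)} ≤
      Smin (fun a b => ((hammingDist a b : ℕ) : ℝ≥0)) 𝓒' ∧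
    Smin (fun a b => ((hammingDist a b : ℕ) : ℝ≥0)) 𝓒' ≤ Smin (fun a b => ((hammingDist a b : ℕ) : ℝ≥0)) 𝓒 := by
  constructor
  · have hset : {C'' : (Fin (m - 2) → Bool) → Bool | ∃ C ∈ 𝓒',
        C'' = fun a => C (fun i => if h : (i : ℕ) < m - 2 then a ⟨(i : ℕ), h⟩
          else if (i : ℕ) = m - 2 then !ym1 else !ym)}
        = (fun C a => C (embQ m ym1 ym a)) '' 𝓒' := by
      ext D
      constructor
      · rintro ⟨C, hC, rfl⟩
        exact ⟨C, hC, rfl⟩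
      · rintro ⟨C, hC, rfl⟩
        exact ⟨C, hC, rfl⟩
    rw [hset]
    unfold SMQ Smin sampleComplexity
    apply sInf_le_sInf
    rintro nn ⟨k, rfl, hk⟩
    exact ⟨k, rfl, keyred m hm 𝓒' ym1 ym hP1 hP2 k 𝓒' subset_rfl hk⟩
  · unfold Smin sampleComplexity
    apply sInf_le_sInf
    rintro nn ⟨k, rfl, hk⟩
    exact ⟨k, rfl, identifiable_mono id
      (fun x C => CSmin (fun a b => ((hammingDist a b : ℕ) : ℝ≥0)) x C) k 𝓒 𝓒' hsub hk⟩
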